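/- Let F be a group, let G be a finite abelian irreducible F-group, let m be a natural number, and let N be a positive integer. Then the number of N-tuples (y₁,…,y_N) ∈ (G^m)^N with [y₁,…,y_N]_F = G^m equals ∏_{k=0}^{m−1} (|G|^N − h_F(G)^k), as an identity of integers. -/

import Mathlib

section FGroupDefs

variable (F : Type*) [Group F]

/-- A subgroup of an `F`-group is a *normal `F`-subgroup* if it is normal and
stable under the `F`-action. -/
def IsNormalFSubgroup {G : Type*} [Group G] [MulDistribMulAction F G]
    (H : Subgroup G) : Prop :=
  H.Normal ∧ ∀ (f : F) (x : G), x ∈ H → f • x ∈ H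

/-- An *irreducible `F`-group* is a nontrivial `F`-group whose only normal
`F`-subgroups are the trivial subgroup and the whole group. -/
def IsIrreducibleFGroup (G : Type*) [Group G] [MulDistribMulAction F G] : Prop :=
  Nontrivial G ∧ ∀ H : Subgroup G, IsNormalFSubgroup F H → H = ⊥ ∨ H = ⊤

/-- `[s]_F`: the smallest normal `F`-subgroup containing the set `s`. -/
def normalFClosure {G : Type*} [Group G] [MulDistribMulAction F G] (s : Set G) :
    Subgroup G :=
  sInf {H : Subgroup G | IsNormalFSubgroup F H ∧ s ⊆ H}

/-- A group homomorphism is an `F`-group morphism if it commutes with the `F`-actions. -/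
def IsFHom {G G' : Type*} [Group G] [Group G'] [MulDistribMulAction F G]
    [MulDistribMulAction F G'] (φ : G →* G') : Prop :=
  ∀ (f : F) (x : G), φ (f • x) = f • φ x

/-- `h_F(G)`: the number of `F`-group endomorphisms of `G`. -/
noncomputable def hF (G : Type*) [Group G] [MulDistribMulAction F G] : ℕ :=
  Nat.card {φ : G →* G // IsFHom F φ}

/-- Two `F`-groups are isomorphic if there is a bijective group homomorphism
between them commuting with the `F`-actions. -/
def IsFIso (G G' : Type*) [Group G] [Group G'] [MulDistribMulAction F G]
    [MulDistribMulAction F G'] : Prop :=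
  ∃ e : G ≃* G', ∀ (f : F) (x : G), e (f • x) = f • e x

end FGroupDefs



section Helpers
variable {F : Type*} [Group F]
variable {A B : Type*} [Group A] [Group B]
  [MulDistribMulAction F A] [MulDistribMulAction F B]

theorem normal_of_comm (hc : ∀ a b : A, a * b = b * a) (H : Subgroup A) : H.Normal := by
  refine ⟨fun n hn g => ?_⟩
  have : g * n * g⁻¹ = n := by rw [hc g n, mul_assoc, mul_inv_cancel, mul_one]
  rwa [this]

theorem subset_normalFClosure (s : Set A) : s ⊆ normalFClosure F s := by
  exact fun x hx => Subgroup.mem_sInf.mpr fun H hH => hH.2 hx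

theorem normalFClosure_stable (s : Set A) (f : F) (x : A)
    (hx : x ∈ normalFClosure F s) : f • x ∈ normalFClosure F s := by
  rw [normalFClosure, Subgroup.mem_sInf] at *
  exact fun H hH => hH.1.2 f x (hx H hH)

theorem normalFClosure_le {s : Set A} {H : Subgroup A}
    (hH : IsNormalFSubgroup F H) (hs : s ⊆ H) : normalFClosure F s ≤ H :=
  sInf_le ⟨hH, hs⟩

theorem map_normalFClosure (hc : ∀ a b : A, a * b = b * a)
    (hcB : ∀ a b : B, a * b = b * a)
    (π : A →* B) (hπ : IsFHom F π) (s : Set A) :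
    (normalFClosure F s).map π = normalFClosure F (π '' s) := by
  apply le_antisymm
  · rw [Subgroup.map_le_iff_le_comap]
    apply normalFClosure_le
    · refine ⟨normal_of_comm hc _, fun f x hx => ?_⟩
      rw [Subgroup.mem_comap] at *
      rw [hπ]
      exact normalFClosure_stable _ _ _ hx
    · exact fun x hx => Subgroup.mem_comap.mpr (subset_normalFClosure _ ⟨x, hx, rfl⟩)
  · apply normalFClosure_le
    · refine ⟨normal_of_comm hcB _, fun f x hx => ?_⟩
      rw [Subgroup.mem_map] at *
      obtain ⟨a, ha, rfl⟩ := hx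
      exact ⟨f • a, normalFClosure_stable _ _ _ ha, hπ f a⟩
    · rintro x ⟨a, ha, rfl⟩
      exact ⟨a, subset_normalFClosure _ ha, rfl⟩

theorem fhom_ext_of_closure {s : Set B} (hs : normalFClosure F s = ⊤)
    (hcB : ∀ a b : B, a * b = b * a)
    {φ ψ : B →* A} (hφ : IsFHom F φ) (hψ : IsFHom F ψ)
    (h : ∀ x ∈ s, φ x = ψ x) : φ = ψ := by
  let D : Subgroup B :=
    { carrier := {a | φ a = ψ a}
      one_mem' := by simp
      mul_mem' := by
        intro a b ha hb
        simp only [Set.mem_setOf_eq, map_mul] at *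
        rw [ha, hb]
      inv_mem' := by
        intro a ha
        simp only [Set.mem_setOf_eq, map_inv] at *
        rw [ha] }
  have hD : normalFClosure F s ≤ D := by
    apply normalFClosure_le
    · refine ⟨normal_of_comm hcB _, fun f x hx => ?_⟩
      have : φ (f • x) = ψ (f • x) := by rw [hφ, hψ, hx]
      exact this
    · exact h
  ext x
  exact hD (hs ▸ Subgroup.mem_top x)
end Helpers

section Char
variable {F : Type*} [Group F]
variable {A B : Type*} [Group A] [Group B]
  [MulDistribMulAction F A] [MulDistribMulAction F B]

theorem closure_range_top_iff
    (hcA : ∀ a b : A, a * b = b * a) (hcB : ∀ a b : B, a * b = b * a)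
    (hirr : IsIrreducibleFGroup F A)
    {N : ℕ} (y : Fin N → A × B) :
    normalFClosure F (Set.range y) = ⊤ ↔
      normalFClosure F (Set.range fun j => (y j).2) = ⊤ ∧
        ¬ ∃ φ : B →* A, IsFHom F φ ∧ ∀ j, (y j).1 = φ ((y j).2) := by
  have hcP : ∀ a b : A × B, a * b = b * a := fun a b => Prod.ext (hcA _ _) (hcB _ _)
  have hsndF : IsFHom F (MonoidHom.snd A B) := fun f x => rfl
  have hmap : (normalFClosure F (Set.range y)).map (MonoidHom.snd A B) =
      normalFClosure F (Set.range fun j => (y j).2) := by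
    rw [map_normalFClosure hcP hcB _ hsndF]
    congr 1
    rw [← Set.range_comp]
    rfl
  constructor
  · intro hH
    constructor
    · rw [← hmap, hH]
      exact Subgroup.map_top_of_surjective _ Prod.snd_surjective
    · rintro ⟨φ, hφ, hz⟩
      haveI := hirr.1
      obtain ⟨a, ha⟩ := exists_ne (1 : A)
      let graph : Subgroup (A × B) :=
        { carrier := {x | x.1 = φ x.2}
          one_mem' := by simp
          mul_mem' := by
            intro u v hu hv
            simp only [Set.mem_setOf_eq, Prod.fst_mul, Prod.snd_mul, map_mul] at *
            rw [hu, hv]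
          inv_mem' := by
            intro u hu
            simp only [Set.mem_setOf_eq, Prod.fst_inv, Prod.snd_inv, map_inv] at *
            rw [hu] }
      have hle : normalFClosure F (Set.range y) ≤ graph := by
        apply normalFClosure_le
        · refine ⟨normal_of_comm hcP _, fun f x hx => ?_⟩
          have : (f • x).1 = φ ((f • x).2) := by
            rw [Prod.smul_fst, Prod.smul_snd, hφ, hx]
          exact this
        · rintro x ⟨j, rfl⟩
          exact hz j
      rw [hH] at hle
      have : (a, (1 : B)) ∈ graph := hle (Subgroup.mem_top _)
      simp only [Set.mem_setOf_eq, graph] at this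
      exact ha (by simpa using this)
  · rintro ⟨hgen, hφ⟩
    set H := normalFClosure F (Set.range y) with hHdef
    have hsnd : H.map (MonoidHom.snd A B) = ⊤ := by rw [hmap, hgen]
    have hex : ∀ b : B, ∃ a : A, (a, b) ∈ H := by
      intro b
      have hb : b ∈ H.map (MonoidHom.snd A B) := hsnd ▸ Subgroup.mem_top b
      obtain ⟨x, hx, hxb⟩ := hb
      exact ⟨x.1, by rwa [show (x.1, b) = x from Prod.ext rfl hxb.symm]⟩
    let K : Subgroup A := H.comap (MonoidHom.inl A B)
    have hK : IsNormalFSubgroup F K := by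
      refine ⟨normal_of_comm hcA _, fun f x hx => ?_⟩
      rw [Subgroup.mem_comap] at *
      have := normalFClosure_stable (Set.range y) f _ hx
      simpa [Prod.smul_mk, smul_one] using this
    have huniq : ∀ (b : B) (a₁ a₂ : A), (a₁, b) ∈ H → (a₂, b) ∈ H →
        a₁ * a₂⁻¹ ∈ K := by
      intro b a₁ a₂ h1 h2
      have hm := mul_mem h1 (inv_mem h2)
      simp only [Prod.mk_mul_mk, Prod.inv_mk, mul_inv_cancel] at hm
      exact Subgroup.mem_comap.mpr (by simpa using hm)
    rcases hirr.2 K hK with hbot | htop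
    · exfalso
      apply hφ
      have huq : ∀ (b : B) (a₁ a₂ : A), (a₁, b) ∈ H → (a₂, b) ∈ H → a₁ = a₂ := by
        intro b a₁ a₂ h1 h2
        have := huniq b a₁ a₂ h1 h2
        rw [hbot, Subgroup.mem_bot] at this
        exact mul_inv_eq_one.mp this
      choose φ0 hφ0 using hex
      have hone : φ0 1 = 1 := huq 1 (φ0 1) 1 (hφ0 1) (by exact one_mem H)
      refine ⟨{ toFun := φ0, map_one' := hone, map_mul' := ?_ }, ?_, ?_⟩
      · intro b b'
        have hm : (φ0 b * φ0 b', b * b') ∈ H := by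
          simpa using mul_mem (hφ0 b) (hφ0 b')
        exact huq (b * b') (φ0 (b * b')) (φ0 b * φ0 b') (hφ0 _) hm
      · intro f b
        have hm : (f • φ0 b, f • b) ∈ H := by
          have := normalFClosure_stable (Set.range y) f _ (hφ0 b)
          simpa [Prod.smul_mk] using this
        exact huq (f • b) (φ0 (f • b)) (f • φ0 b) (hφ0 _) hm
      · intro j
        have hyj0 : y j ∈ H := subset_normalFClosure (Set.range y) ⟨j, rfl⟩
        have hyj : ((y j).1, (y j).2) ∈ H := by simpa using hyj0
        exact huq _ _ _ hyj (hφ0 _)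
    · rw [eq_top_iff]
      rintro ⟨a, b⟩ -
      obtain ⟨a', ha'⟩ := hex b
      have h1 : (a * a'⁻¹, (1 : B)) ∈ H := by
        have : a * a'⁻¹ ∈ K := htop ▸ Subgroup.mem_top _
        simpa using (Subgroup.mem_comap.mp this)
      have := mul_mem h1 ha'
      simpa using this
end Char

section HomCount
variable {F : Type*} [Group F] {A : Type*} [Group A] [MulDistribMulAction F A]

theorem smul_mulSingle {m : ℕ} (f : F) (i : Fin m) (x : A) :
    f • Pi.mulSingle (M := fun _ : Fin m => A) i x = Pi.mulSingle i (f • x) := by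
  funext j
  rcases eq_or_ne j i with rfl | hj
  · simp
  · simp [Pi.mulSingle_eq_of_ne hj, smul_one]

theorem card_pi_fhom (hcA : ∀ a b : A, a * b = b * a) (m : ℕ) :
    Nat.card {φ : (Fin m → A) →* A // IsFHom F φ} = (hF F A) ^ m := by
  letI : CommGroup A := { mul_comm := hcA }
  have key : ∀ Φ : (Fin m → A) →* A,
      IsFHom F Φ ↔ ∀ i, IsFHom F ((Pi.monoidHomMulEquiv (fun _ : Fin m => A) A) Φ i) := by
    intro Φ
    constructor
    · intro hΦ i f x
      show Φ (Pi.mulSingle i (f • x)) = f • Φ (Pi.mulSingle i x)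
      rw [← smul_mulSingle, hΦ]
    · intro h f x
      have h1 : f • x = ∏ i, Pi.mulSingle i (f • x i) := by
        conv_lhs => rw [← Finset.univ_prod_mulSingle x]
        rw [Finset.smul_prod']
        exact Finset.prod_congr rfl fun i _ => smul_mulSingle f i (x i)
      have h2 : ∀ i, Φ (Pi.mulSingle i (f • x i)) = f • Φ (Pi.mulSingle i (x i)) := by
        intro i
        exact h i f (x i)
      calc Φ (f • x) = ∏ i, Φ (Pi.mulSingle i (f • x i)) := by rw [h1, map_prod]
        _ = ∏ i, f • Φ (Pi.mulSingle i (x i)) := Finset.prod_congr rfl fun i _ => h2 i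
        _ = f • ∏ i, Φ (Pi.mulSingle i (x i)) := (Finset.smul_prod').symm
        _ = f • Φ x := by rw [← map_prod, Finset.univ_prod_mulSingle]
  have e : {φ : (Fin m → A) →* A // IsFHom F φ} ≃ (Fin m → {φ : A →* A // IsFHom F φ}) :=
    ((Pi.monoidHomMulEquiv (fun _ : Fin m => A) A).toEquiv.subtypeEquiv key).trans
      (Equiv.subtypePiEquivPi)
  rw [Nat.card_congr e, Nat.card_fun, Nat.card_eq_fintype_card (α := Fin m), Fintype.card_fin]
  rfl
end HomCount

section Trans
variable {F : Type*} [Group F]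

/-- Splitting off the first coordinate of a finite power. -/
def piSuccMulEquiv (G : Type*) [Group G] (m : ℕ) :
    (Fin (m + 1) → G) ≃* G × (Fin m → G) where
  toFun a := (a 0, fun i => a i.succ)
  invFun p := Fin.cons p.1 p.2
  left_inv a := by
    funext i
    refine Fin.cases ?_ (fun j => ?_) i <;> simp
  right_inv p := by
    ext <;> simp
  map_mul' a b := rfl

theorem closure_top_iff_of_fiso {A B : Type*} [Group A] [Group B]
    [MulDistribMulAction F A] [MulDistribMulAction F B]
    (hcA : ∀ a b : A, a * b = b * a) (hcB : ∀ a b : B, a * b = b * a)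
    (e : A ≃* B) (he : IsFHom F e.toMonoidHom)
    {N : ℕ} (y : Fin N → A) :
    normalFClosure F (Set.range fun j => e (y j)) = ⊤ ↔
      normalFClosure F (Set.range y) = ⊤ := by
  have hr : Set.range (fun j => e (y j)) = e.toMonoidHom '' Set.range y := by
    rw [← Set.range_comp]; rfl
  rw [hr, ← map_normalFClosure hcA hcB _ he]
  constructor
  · intro h
    have hinj : Function.Injective e.toMonoidHom := e.injective
    apply Subgroup.map_injective hinj
    rw [h]
    exact (Subgroup.map_top_of_surjective _ e.surjective).symm
  · intro h
    rw [h]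
    exact Subgroup.map_top_of_surjective _ e.surjective
end Trans


/-- for a finite abelian irreducible `F`-group `G`, the number of
`N`-tuples in `G^m` generating `G^m` as a normal `F`-subgroup is
`∏_{k=0}^{m−1} (|G|^N − h_F(G)^k)`. -/
theorem count_tuples_abelian
    {F G : Type*} [Group F] [Group G] [MulDistribMulAction F G] [Finite G]
    (hab : ∀ a b : G, a * b = b * a)
    (hirr : IsIrreducibleFGroup F G)
    (m : ℕ) (N : ℕ) (hN : 0 < N) :
    (Nat.card {y : Fin N → (Fin m → G) //
        normalFClosure F (Set.range y) = ⊤} : ℤ) =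
      ∏ k ∈ Finset.range m, ((Nat.card G : ℤ) ^ N - (hF F G : ℤ) ^ k) := by
  classical
  induction m with
  | zero =>
      have huniq : ∀ y : Fin N → (Fin 0 → G),
          normalFClosure F (Set.range y) = ⊤ := by
        intro y
        rw [eq_top_iff]
        intro x _
        have hx : x = 1 := Subsingleton.elim x 1
        rw [hx]
        exact one_mem _
      rw [Nat.card_congr (Equiv.subtypeUnivEquiv huniq), Nat.card_unique]
      simp
  | succ m ih =>
      have hcQ : ∀ a b : Fin m → G, a * b = b * a :=
        fun a b => funext fun i => hab _ _
      have hcP : ∀ a b : G × (Fin m → G), a * b = b * a :=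
        fun a b => Prod.ext (hab _ _) (hcQ _ _)
      set e0 := piSuccMulEquiv G m with he0def
      have he0 : IsFHom F e0.toMonoidHom := fun f x => rfl
      have htrans : Nat.card {y : Fin N → (Fin (m + 1) → G) //
            normalFClosure F (Set.range y) = ⊤}
          = Nat.card {y : Fin N → G × (Fin m → G) //
            normalFClosure F (Set.range y) = ⊤} := by
        apply Nat.card_congr
        refine Equiv.subtypeEquiv
          (Equiv.arrowCongr (Equiv.refl (Fin N)) e0.toEquiv) fun y => ?_
        exact (closure_top_iff_of_fiso (fun a b => funext fun i => hab _ _)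
          hcP e0 he0 y).symm
      rw [htrans, Finset.prod_range_succ, ← ih]
      -- the bad set attached to a generating tuple for `Fin m → G`
      haveI : Fintype G := Fintype.ofFinite G
      set S := {y' : Fin N → (Fin m → G) // normalFClosure F (Set.range y') = ⊤}
        with hSdef
      let bad : S → Set (Fin N → G) := fun y' =>
        Set.range (fun φ : {φ : (Fin m → G) →* G // IsFHom F φ} =>
          fun j => φ.1 (y'.1 j))
      have hbadiff : ∀ (y' : S) (z : Fin N → G),
          z ∈ bad y' ↔ ∃ φ : (Fin m → G) →* G, IsFHom F φ ∧
            ∀ j, z j = φ (y'.1 j) := by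
        intro y' z
        constructor
        · rintro ⟨φ, hφ⟩
          exact ⟨φ.1, φ.2, fun j => (congrFun hφ j).symm⟩
        · rintro ⟨φ, hφ, hz⟩
          exact ⟨⟨φ, hφ⟩, funext fun j => (hz j).symm⟩
      have hchar : ∀ y : Fin N → G × (Fin m → G),
          normalFClosure F (Set.range y) = ⊤ ↔
            (normalFClosure F (Set.range fun j => (y j).2) = ⊤ ∧
              ¬ ∃ φ : (Fin m → G) →* G, IsFHom F φ ∧ ∀ j, (y j).1 = φ ((y j).2)) :=
        fun y => closure_range_top_iff hab hcQ hirr y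
      have esig : {y : Fin N → G × (Fin m → G) //
            normalFClosure F (Set.range y) = ⊤}
          ≃ Σ y' : S, {z : Fin N → G // z ∉ bad y'} :=
        { toFun := fun t =>
            ⟨⟨fun j => (t.1 j).2, ((hchar t.1).mp t.2).1⟩,
              ⟨fun j => (t.1 j).1, fun hmem =>
                ((hchar t.1).mp t.2).2 ((hbadiff _ _).mp hmem)⟩⟩
          invFun := fun w =>
            ⟨fun j => (w.2.1 j, w.1.1 j),
              (hchar _).mpr ⟨w.1.2, fun hex => w.2.2 ((hbadiff w.1 w.2.1).mpr hex)⟩⟩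
          left_inv := fun t => rfl
          right_inv := fun w => rfl }
      rw [Nat.card_congr esig]
      haveI : Fintype S := Fintype.ofFinite S
      haveI : ∀ y' : S, Fintype {z : Fin N → G // z ∉ bad y'} :=
        fun y' => Fintype.ofFinite _
      rw [Nat.card_eq_fintype_card (α := Σ y' : S, {z : Fin N → G // z ∉ bad y'}),
        Fintype.card_sigma]
      push_cast
      have hfiber : ∀ y' : S, (Fintype.card {z : Fin N → G // z ∉ bad y'} : ℤ)
          = (Nat.card G : ℤ) ^ N - (hF F G : ℤ) ^ m := by
        intro y'
        have hinj : Function.Injective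
            (fun φ : {φ : (Fin m → G) →* G // IsFHom F φ} =>
              fun j => φ.1 (y'.1 j)) := by
          intro φ ψ hEq
          apply Subtype.ext
          apply fhom_ext_of_closure y'.2 hcQ φ.2 ψ.2
          rintro x ⟨j, rfl⟩
          exact congrFun hEq j
        have hbadcard : (bad y').ncard = (hF F G) ^ m := by
          have hrange : Nat.card (Set.range fun φ : {φ : (Fin m → G) →* G // IsFHom F φ} =>
              fun j => φ.1 (y'.1 j)) = hF F G ^ m := by
            rw [Nat.card_range_of_injective hinj]
            exact card_pi_fhom hab m
          rw [← Nat.card_coe_set_eq]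
          exact hrange
        have hcompl := Set.ncard_add_ncard_compl (bad y')
        have htot : Nat.card (Fin N → G) = (Nat.card G) ^ N := by
          rw [Nat.card_fun, Nat.card_eq_fintype_card (α := Fin N), Fintype.card_fin]
        have hcc : Fintype.card {z : Fin N → G // z ∉ bad y'} = ((bad y')ᶜ).ncard := by
          rw [← Nat.card_coe_set_eq, ← Nat.card_eq_fintype_card]
          apply Nat.card_congr
          exact Equiv.subtypeEquivRight fun z => (Set.mem_compl_iff _ _).symm
        rw [htot, hbadcard] at hcompl
        rw [hcc]
        have hcast : ((hF F G) ^ m : ℤ) + (((bad y')ᶜ).ncard : ℤ)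
            = ((Nat.card G : ℤ)) ^ N := by exact_mod_cast congrArg Nat.cast hcompl
        linarith
      rw [Finset.sum_congr rfl fun y' _ => hfiber y']
      rw [Finset.sum_const, Finset.card_univ, nsmul_eq_mul,
        Nat.card_eq_fintype_card (α := S)]
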